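/- Let q ∈ (0,1). For every real t one has θ₃(t, q)/(θ₃(t, q²))² = (1/θ₃(0, q)) · (1 + (θ₂(t, q²)/θ₃(t, q²))²), where θ₃(t, q) = ∑_{n∈ℤ} q^{n²} cos(2nt) and θ₂(t, q) = 2∑_{n=0}^∞ q^{(n+1/2)²} cos((2n+1)t). -/

import Mathlib

open Real

-- pointwise inequalities
lemma abs_sub_one_le_sq (x : ℝ) : |x| - 1 ≤ x ^ 2 := by
  nlinarith [sq_abs x, abs_nonneg x, sq_nonneg (|x| - 1)]

lemma abs_sub_one_le_half_sq (x : ℝ) : |x| - 1 ≤ (x + 1/2) ^ 2 := by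
  rcases le_or_gt 0 x with h | h
  · rw [abs_of_nonneg h]; nlinarith
  · rw [abs_of_neg h]; nlinarith [sq_nonneg (x+1)]

-- master summability lemma
lemma summable_norm_aux {q : ℝ} (hq0 : 0 < q) (hq1 : q < 1) (e v : ℤ → ℝ)
    (he : ∀ n : ℤ, |(n : ℝ)| - 1 ≤ e n) (hv : ∀ n, |v n| ≤ 1) :
    Summable fun n : ℤ => ‖q ^ (e n) * v n‖ := by
  have hgeo : Summable fun n : ℕ => q ^ n := summable_geometric_of_lt_one hq0.le hq1
  have hbase : Summable fun n : ℤ => q ^ (n.natAbs) / q := by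
    apply Summable.div_const
    apply Summable.of_nat_of_neg_add_one
    · simpa using hgeo
    · have : Summable fun n : ℕ => q ^ (n+1) := by
        simpa [pow_succ] using hgeo.mul_right q
      refine this.congr fun n => ?_
      rw [show ((-(((n:ℕ):ℤ) + 1)).natAbs) = n+1 by omega]
  apply Summable.of_nonneg_of_le (fun n => norm_nonneg _) _ hbase
  intro n
  rw [Real.norm_eq_abs, abs_mul]
  have h1 : |q ^ (e n)| = q ^ (e n) := abs_of_pos (Real.rpow_pos_of_pos hq0 _)
  rw [h1]
  have h2 : q ^ (e n) * |v n| ≤ q ^ (e n) * 1 :=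
    mul_le_mul_of_nonneg_left (hv n) (Real.rpow_pos_of_pos hq0 _).le
  have h3 : q ^ (e n) ≤ q ^ ((|(n:ℝ)|) - 1) :=
    Real.rpow_le_rpow_of_exponent_ge hq0 hq1.le (he n)
  have h4 : q ^ ((|(n:ℝ)|) - 1) = q ^ (n.natAbs) / q := by
    have habs : |(n:ℝ)| = ((n.natAbs : ℕ) : ℝ) := by simp [Nat.cast_natAbs]
    rw [Real.rpow_sub hq0, Real.rpow_one, habs, Real.rpow_natCast]
  calc q ^ (e n) * |v n| ≤ q ^ (e n) * 1 := h2
    _ = q ^ (e n) := mul_one _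
    _ ≤ q ^ ((|(n:ℝ)|) - 1) := h3
    _ = q ^ (n.natAbs) / q := h4

lemma sq_rpow_eq {q : ℝ} (hq0 : 0 < q) (x : ℝ) : ((q^2 : ℝ)) ^ x = q ^ (2*x) := by
  rw [← Real.rpow_natCast q 2, ← Real.rpow_mul hq0.le]
  norm_num

lemma prodEvenR {q : ℝ} (hq0 : 0 < q) (t x y : ℝ) :
    (q ^ ((x+y)^2) * Real.cos (2*(x+y)*t)) * (q ^ ((x-y)^2)) =
    ((q^2) ^ (x^2) * Real.cos (2*x*t)) * ((q^2) ^ (y^2) * Real.cos (2*y*t))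
      - ((q^2) ^ (x^2) * Real.sin (2*x*t)) * ((q^2) ^ (y^2) * Real.sin (2*y*t)) := by
  rw [sq_rpow_eq hq0, sq_rpow_eq hq0,
    show 2*(x+y)*t = 2*x*t + 2*y*t by ring, Real.cos_add]
  have E : q ^ ((x+y)^2) * q ^ ((x-y)^2) = q ^ (2*x^2) * q ^ (2*y^2) := by
    rw [← Real.rpow_add hq0, ← Real.rpow_add hq0]
    congr 1; ring
  linear_combination (Real.cos (2*x*t) * Real.cos (2*y*t) - Real.sin (2*x*t) * Real.sin (2*y*t)) * E

lemma prodOddR {q : ℝ} (hq0 : 0 < q) (t x y : ℝ) :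
    (q ^ ((x+y+1)^2) * Real.cos (2*(x+y+1)*t)) * (q ^ ((x-y)^2)) =
    ((q^2) ^ ((x+1/2)^2) * Real.cos ((2*x+1)*t)) * ((q^2) ^ ((y+1/2)^2) * Real.cos ((2*y+1)*t))
      - ((q^2) ^ ((x+1/2)^2) * Real.sin ((2*x+1)*t)) * ((q^2) ^ ((y+1/2)^2) * Real.sin ((2*y+1)*t)) := by
  rw [sq_rpow_eq hq0, sq_rpow_eq hq0,
    show 2*(x+y+1)*t = (2*x+1)*t + (2*y+1)*t by ring, Real.cos_add]
  have E : q ^ ((x+y+1)^2) * q ^ ((x-y)^2) = q ^ (2*(x+1/2)^2) * q ^ (2*(y+1/2)^2) := by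
    rw [← Real.rpow_add hq0, ← Real.rpow_add hq0]
    congr 1; ring
  linear_combination (Real.cos ((2*x+1)*t) * Real.cos ((2*y+1)*t)
    - Real.sin ((2*x+1)*t) * Real.sin ((2*y+1)*t)) * E

def evenSet : Set (ℤ × ℤ) := {p | (p.1 + p.2) % 2 = 0}

def evenEquiv : ℤ × ℤ ≃ evenSet where
  toFun p := ⟨(p.1 + p.2, p.1 - p.2), by simp only [evenSet, Set.mem_setOf_eq]; omega⟩
  invFun p := ((p.1.1 + p.1.2)/2, (p.1.1 - p.1.2)/2)
  left_inv p := by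
    obtain ⟨r, s⟩ := p
    simp only [Prod.mk.injEq]
    constructor <;> omega
  right_inv p := by
    obtain ⟨⟨m, n⟩, h⟩ := p
    simp only [evenSet, Set.mem_setOf_eq] at h
    apply Subtype.ext
    simp only [Prod.mk.injEq]
    constructor <;> omega

def oddEquiv : ℤ × ℤ ≃ ↥(evenSetᶜ) where
  toFun p := ⟨(p.1 + p.2 + 1, p.1 - p.2), by
    simp only [evenSet, Set.mem_compl_iff, Set.mem_setOf_eq]; omega⟩
  invFun p := ((p.1.1 + p.1.2 - 1)/2, (p.1.1 - p.1.2 - 1)/2)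
  left_inv p := by
    obtain ⟨r, s⟩ := p
    simp only [Prod.mk.injEq]
    constructor <;> omega
  right_inv p := by
    obtain ⟨⟨m, n⟩, h⟩ := p
    simp only [evenSet, Set.mem_compl_iff, Set.mem_setOf_eq] at h
    apply Subtype.ext
    simp only [Prod.mk.injEq]
    constructor <;> omega

/-- The third Jacobi theta function `θ₃(t, q) = ∑_{n∈ℤ} q^{n²} cos(2nt)`. -/
noncomputable def theta3 (t q : ℝ) : ℝ :=
  ∑' n : ℤ, q ^ ((n : ℝ) ^ 2) * Real.cos (2 * n * t)

/-- The second Jacobi theta function `θ₂(t, q) = 2∑_{n≥0} q^{(n+1/2)²} cos((2n+1)t)`. -/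
noncomputable def theta2 (t q : ℝ) : ℝ :=
  2 * ∑' n : ℕ, q ^ (((n : ℝ) + 1 / 2) ^ 2) * Real.cos ((2 * n + 1) * t)

lemma key_identity (q : ℝ) (hq0 : 0 < q) (hq1 : q < 1) (t : ℝ) :
    theta3 t q * theta3 0 q = (theta3 t (q^2))^2 + (theta2 t (q^2))^2 := by
  have hq20 : 0 < q^2 := by positivity
  have hq21 : q^2 < 1 := by nlinarith
  set f : ℤ → ℝ := fun n => q ^ ((n:ℝ)^2) * Real.cos (2*n*t) with hf
  set g : ℤ → ℝ := fun n => q ^ ((n:ℝ)^2) with hg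
  set a : ℤ → ℝ := fun r => (q^2) ^ ((r:ℝ)^2) * Real.cos (2*r*t) with ha
  set b : ℤ → ℝ := fun r => (q^2) ^ ((r:ℝ)^2) * Real.sin (2*r*t) with hb
  set a' : ℤ → ℝ := fun r => (q^2) ^ (((r:ℝ)+1/2)^2) * Real.cos ((2*r+1)*t) with ha'
  set b' : ℤ → ℝ := fun r => (q^2) ^ (((r:ℝ)+1/2)^2) * Real.sin ((2*r+1)*t) with hb'
  -- summability
  have Nf : Summable fun n => ‖f n‖ :=
    summable_norm_aux hq0 hq1 _ _ (fun n => abs_sub_one_le_sq _) (fun n => Real.abs_cos_le_one _)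
  have Ng : Summable fun n => ‖g n‖ := by
    have := summable_norm_aux hq0 hq1 (fun n : ℤ => (n:ℝ)^2) (fun _ => 1)
      (fun n => abs_sub_one_le_sq _) (fun n => by norm_num)
    simpa [hg] using this
  have Na : Summable fun n => ‖a n‖ :=
    summable_norm_aux hq20 hq21 _ _ (fun n => abs_sub_one_le_sq _) (fun n => Real.abs_cos_le_one _)
  have Nb : Summable fun n => ‖b n‖ :=
    summable_norm_aux hq20 hq21 _ _ (fun n => abs_sub_one_le_sq _) (fun n => Real.abs_sin_le_one _)
  have Na' : Summable fun n => ‖a' n‖ :=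
    summable_norm_aux hq20 hq21 _ _ (fun n => abs_sub_one_le_half_sq _) (fun n => Real.abs_cos_le_one _)
  have Nb' : Summable fun n => ‖b' n‖ :=
    summable_norm_aux hq20 hq21 _ _ (fun n => abs_sub_one_le_half_sq _) (fun n => Real.abs_sin_le_one _)
  have Sa' := Na'.of_norm
  -- basic sums
  have hfS : HasSum f (theta3 t q) := Nf.of_norm.hasSum
  have hgS : HasSum g (theta3 0 q) := by
    have e : theta3 0 q = ∑' n : ℤ, g n := by
      simp only [theta3, mul_zero, Real.cos_zero, mul_one, hg]
    exact e ▸ Ng.of_norm.hasSum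
  have haS : HasSum a (theta3 t (q^2)) := Na.of_norm.hasSum
  have ha'S : HasSum a' (∑' r : ℤ, a' r) := Sa'.hasSum
  -- theta2 as a sum over ℤ
  have h1 : Summable fun n : ℕ => a' n := Sa'.comp_injective (fun x y h => by exact_mod_cast h)
  have h2 : Summable fun n : ℕ => a' (-(n+1)) := Sa'.comp_injective (fun x y h => by omega)
  have hneg : ∀ n : ℕ, a' (-((n:ℤ)+1)) = a' n := by
    intro n
    simp only [ha']
    push_cast
    rw [show (-((n:ℝ)+1)+1/2)^2 = ((n:ℝ)+1/2)^2 by ring,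
        show (2*(-((n:ℝ)+1))+1)*t = -((2*(n:ℝ)+1)*t) by ring, Real.cos_neg]
  have ht2 : theta2 t (q^2) = ∑' r : ℤ, a' r := by
    rw [tsum_of_nat_of_neg_add_one h1 h2]
    have hXY : (∑' n:ℕ, (q^2) ^ (((n:ℝ)+1/2)^2) * Real.cos ((2*(n:ℝ)+1)*t)) = ∑' n:ℕ, a' (n:ℤ) := by
      apply tsum_congr
      intro n
      simp only [ha']
      push_cast
      rfl
    have hZ : (∑' n:ℕ, a' (-((n:ℤ)+1))) = ∑' n:ℕ, a' (n:ℤ) := tsum_congr hneg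
    rw [theta2, hXY, hZ, two_mul]
  -- odd sums vanish
  have hbneg : ∀ r : ℤ, b (-r) = - b r := by
    intro r
    simp only [hb]
    push_cast
    rw [show (-(r:ℝ))^2 = (r:ℝ)^2 by ring, show 2*(-(r:ℝ))*t = -(2*(r:ℝ)*t) by ring, Real.sin_neg]
    ring
  have htb : ∑' r : ℤ, b r = 0 := by
    have h1 := (Equiv.neg ℤ).tsum_eq b
    simp only [Equiv.neg_apply] at h1
    have h2 : ∑' r : ℤ, b (-r) = - ∑' r : ℤ, b r := by
      rw [tsum_congr hbneg, tsum_neg]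
    linarith [h1, h2]
  have hbS : HasSum b 0 := htb ▸ Nb.of_norm.hasSum
  have hb'neg : ∀ r : ℤ, b' (-1-r) = - b' r := by
    intro r
    simp only [hb']
    push_cast
    rw [show ((-1-(r:ℝ))+1/2)^2 = ((r:ℝ)+1/2)^2 by ring,
        show (2*(-1-(r:ℝ))+1)*t = -((2*(r:ℝ)+1)*t) by ring, Real.sin_neg]
    ring
  have htb' : ∑' r : ℤ, b' r = 0 := by
    have h1 := (Equiv.subLeft (-1 : ℤ)).tsum_eq b'
    simp only [Equiv.subLeft_apply] at h1
    have h2 : ∑' r : ℤ, b' (-1-r) = - ∑' r : ℤ, b' r := by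
      rw [tsum_congr hb'neg, tsum_neg]
    linarith [h1, h2]
  have hb'S : HasSum b' 0 := htb' ▸ Nb'.of_norm.hasSum
  -- products
  have Saa : Summable fun p : ℤ×ℤ => a p.1 * a p.2 := summable_mul_of_summable_norm Na Na
  have Sbb : Summable fun p : ℤ×ℤ => b p.1 * b p.2 := summable_mul_of_summable_norm Nb Nb
  have Sa'a' : Summable fun p : ℤ×ℤ => a' p.1 * a' p.2 := summable_mul_of_summable_norm Na' Na'
  have Sb'b' : Summable fun p : ℤ×ℤ => b' p.1 * b' p.2 := summable_mul_of_summable_norm Nb' Nb'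
  have SH : Summable fun p : ℤ×ℤ => f p.1 * g p.2 := summable_mul_of_summable_norm Nf Ng
  set H : ℤ×ℤ → ℝ := fun p => f p.1 * g p.2 with hH
  have hHsum : HasSum H (theta3 t q * theta3 0 q) := hfS.mul hgS SH
  have hEven : HasSum ((fun p : ℤ×ℤ => H p) ∘ (Subtype.val : ↥evenSet → ℤ×ℤ)) ((theta3 t (q^2))^2) := by
    apply (evenEquiv.hasSum_iff).mp
    have base : HasSum (fun p : ℤ×ℤ => a p.1 * a p.2 - b p.1 * b p.2)
        (theta3 t (q^2) * theta3 t (q^2) - 0 * 0) := (haS.mul haS Saa).sub (hbS.mul hbS Sbb)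
    have efun : (((fun p : ℤ×ℤ => H p) ∘ (Subtype.val : ↥evenSet → ℤ×ℤ)) ∘ evenEquiv)
        = fun p : ℤ×ℤ => a p.1 * a p.2 - b p.1 * b p.2 := by
      funext p
      obtain ⟨r, s⟩ := p
      show H (r+s, r-s) = _
      simp only [hH, hf, hg, ha, hb]
      push_cast
      exact prodEvenR hq0 t r s
    rw [efun]
    convert base using 1
    ring
  have hOdd : HasSum ((fun p : ℤ×ℤ => H p) ∘ (Subtype.val : ↥(evenSetᶜ) → ℤ×ℤ)) ((∑' r : ℤ, a' r)^2) := by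
    apply (oddEquiv.hasSum_iff).mp
    have base : HasSum (fun p : ℤ×ℤ => a' p.1 * a' p.2 - b' p.1 * b' p.2)
        ((∑' r : ℤ, a' r) * (∑' r : ℤ, a' r) - 0 * 0) := (ha'S.mul ha'S Sa'a').sub (hb'S.mul hb'S Sb'b')
    have efun : (((fun p : ℤ×ℤ => H p) ∘ (Subtype.val : ↥(evenSetᶜ) → ℤ×ℤ)) ∘ oddEquiv)
        = fun p : ℤ×ℤ => a' p.1 * a' p.2 - b' p.1 * b' p.2 := by
      funext p
      obtain ⟨r, s⟩ := p
      show H (r+s+1, r-s) = _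
      simp only [hH, hf, hg, ha', hb']
      push_cast
      exact prodOddR hq0 t r s
    rw [efun]
    convert base using 1
    ring
  have final := hHsum.unique (hEven.add_compl hOdd)
  rw [final, ht2]

lemma summable_g (q : ℝ) (hq0 : 0 < q) (hq1 : q < 1) :
    Summable fun n : ℤ => q ^ ((n:ℝ)^2) := by
  have := summable_norm_aux hq0 hq1 (fun n : ℤ => (n:ℝ)^2) (fun _ => 1)
    (fun n => abs_sub_one_le_sq _) (fun n => by norm_num)
  have h := this.of_norm
  simpa using h

lemma theta3_zero_eq (q : ℝ) : theta3 0 q = ∑' n : ℤ, q ^ ((n:ℝ)^2) := by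
  simp only [theta3, mul_zero, Real.cos_zero, mul_one]

lemma theta3_zero_pos (q : ℝ) (hq0 : 0 < q) (hq1 : q < 1) : 0 < theta3 0 q := by
  rw [theta3_zero_eq]
  exact Summable.tsum_pos (summable_g q hq0 hq1) (fun i => (Real.rpow_pos_of_pos hq0 _).le) 0
    (Real.rpow_pos_of_pos hq0 _)

lemma theta3_lower (q : ℝ) (hq0 : 0 < q) (hq1 : q < 1) (t : ℝ) :
    2 - theta3 0 q ≤ theta3 t q := by
  have Sg := summable_g q hq0 hq1
  have Sf : Summable fun n : ℤ => q ^ ((n:ℝ)^2) * Real.cos (2*n*t) :=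
    (summable_norm_aux hq0 hq1 _ _ (fun n => abs_sub_one_le_sq _)
      (fun n => Real.abs_cos_le_one _)).of_norm
  have hsum : theta3 t q + theta3 0 q
      = ∑' n : ℤ, (q ^ ((n:ℝ)^2) * Real.cos (2*n*t) + q ^ ((n:ℝ)^2)) := by
    rw [theta3_zero_eq, theta3, Summable.tsum_add Sf Sg]
  have h2 : (2:ℝ) ≤ theta3 t q + theta3 0 q := by
    rw [hsum]
    have h0 : q ^ (((0:ℤ):ℝ)^2) * Real.cos (2*(0:ℤ)*t) + q ^ (((0:ℤ):ℝ)^2) = 2 := by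
      norm_num
    calc (2:ℝ) = q ^ (((0:ℤ):ℝ)^2) * Real.cos (2*(0:ℤ)*t) + q ^ (((0:ℤ):ℝ)^2) := h0.symm
      _ ≤ _ := by
        apply Summable.le_tsum (Sf.add Sg) 0
        intro j _
        have hp := Real.rpow_pos_of_pos hq0 ((j:ℝ)^2)
        nlinarith [Real.neg_one_le_cos (2*(j:ℝ)*t)]
  linarith
lemma theta3_zero_lt_two (q : ℝ) (hq0 : 0 < q) (hq3 : q < 1/3) : theta3 0 q < 2 := by
  have hq1 : q < 1 := by linarith
  have h1q : (0:ℝ) < 1 - q := by linarith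
  have Sg := summable_g q hq0 hq1
  have hgeo : Summable fun n : ℕ => q ^ n := summable_geometric_of_lt_one hq0.le hq1
  have Sv : Summable fun n : ℤ => q ^ n.natAbs := by
    apply Summable.of_nat_of_neg_add_one
    · simpa using hgeo
    · have : Summable fun n : ℕ => q ^ (n+1) := by simpa [pow_succ] using hgeo.mul_right q
      refine this.congr fun n => ?_
      rw [show ((-(((n:ℕ):ℤ) + 1)).natAbs) = n+1 by omega]
  have hle : theta3 0 q ≤ ∑' n : ℤ, q ^ n.natAbs := by
    rw [theta3_zero_eq]
    apply Summable.tsum_le_tsum _ Sg Sv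
    intro n
    have habs : |(n:ℝ)| = ((n.natAbs : ℕ) : ℝ) := by simp [Nat.cast_natAbs]
    have hexp : ((n.natAbs : ℕ) : ℝ) ≤ (n:ℝ)^2 := by
      have h1 : ((n.natAbs : ℕ) : ℝ)^2 = (n:ℝ)^2 := by
        rw [← habs, sq_abs]
      have h2 : (n.natAbs : ℝ) ≤ ((n.natAbs : ℕ) : ℝ)^2 := by
        have := Nat.le_self_pow (two_ne_zero) n.natAbs
        exact_mod_cast this
      linarith
    calc q ^ ((n:ℝ)^2) ≤ q ^ (((n.natAbs : ℕ) : ℝ)) :=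
          Real.rpow_le_rpow_of_exponent_ge hq0 hq1.le hexp
      _ = q ^ n.natAbs := Real.rpow_natCast q n.natAbs
  have hval : (∑' n : ℤ, q ^ n.natAbs) = (1-q)⁻¹ + (1-q)⁻¹ * q := by
    have h1 : Summable fun n : ℕ => q ^ (((n:ℤ)).natAbs) := by simpa using hgeo
    have h2 : Summable fun n : ℕ => q ^ ((-(((n:ℕ):ℤ)+1)).natAbs) := by
      have : Summable fun n : ℕ => q ^ (n+1) := by simpa [pow_succ] using hgeo.mul_right q
      refine this.congr fun n => ?_
      rw [show ((-(((n:ℕ):ℤ) + 1)).natAbs) = n+1 by omega]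
    rw [tsum_of_nat_of_neg_add_one (f := fun n : ℤ => q ^ n.natAbs) h1 h2]
    have e1 : (∑' n : ℕ, q ^ (((n:ℤ)).natAbs)) = (1-q)⁻¹ := by
      rw [show (fun n : ℕ => q ^ (((n:ℤ)).natAbs)) = fun n : ℕ => q ^ n by funext n; norm_num]
      exact tsum_geometric_of_lt_one hq0.le hq1
    have e2 : (∑' n : ℕ, q ^ ((-(((n:ℕ):ℤ)+1)).natAbs)) = (1-q)⁻¹ * q := by
      rw [show (fun n : ℕ => q ^ ((-(((n:ℕ):ℤ)+1)).natAbs)) = fun n : ℕ => q ^ n * q by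
        funext n; rw [show ((-(((n:ℕ):ℤ) + 1)).natAbs) = n+1 by omega]; ring]
      rw [tsum_mul_right, tsum_geometric_of_lt_one hq0.le hq1]
    rw [e1, e2]
  have : (1-q)⁻¹ + (1-q)⁻¹ * q < 2 := by
    have he : (1-q)⁻¹ + (1-q)⁻¹ * q = (1+q)/(1-q) := by field_simp
    rw [he, div_lt_iff₀ h1q]
    linarith
  linarith

lemma theta3_pos_aux : ∀ n : ℕ, ∀ q : ℝ, 0 < q → q < 1 → q ^ (2^n) < 1/3 → ∀ t : ℝ, 0 < theta3 t q := by
  intro n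
  induction n with
  | zero =>
    intro q hq0 hq1 hsmall t
    simp only [pow_zero, pow_one] at hsmall
    have h1 := theta3_lower q hq0 hq1 t
    have h2 := theta3_zero_lt_two q hq0 hsmall
    linarith
  | succ n ih =>
    intro q hq0 hq1 hsmall t
    have hq20 : 0 < q^2 := by positivity
    have hq21 : q^2 < 1 := by nlinarith
    have hsmall2 : (q^2) ^ (2^n) < 1/3 := by
      rw [← pow_mul]
      rw [show 2 * 2^n = 2^(n+1) by rw [pow_succ]; ring]
      exact hsmall
    have hB := ih (q^2) hq20 hq21 hsmall2 t
    have hD := theta3_zero_pos q hq0 hq1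
    have hkey := key_identity q hq0 hq1 t
    nlinarith [sq_nonneg (theta2 t (q^2))]

lemma theta3_pos (q : ℝ) (hq0 : 0 < q) (hq1 : q < 1) (t : ℝ) : 0 < theta3 t q := by
  obtain ⟨n, hn⟩ := exists_pow_lt_of_lt_one (show (0:ℝ) < 1/3 by norm_num) hq1
  apply theta3_pos_aux n q hq0 hq1 _ t
  calc q ^ (2^n) ≤ q ^ n := pow_le_pow_of_le_one hq0.le hq1.le (Nat.lt_two_pow_self (n := n)).le
    _ < 1/3 := hn


/-- For `q ∈ (0,1)` and every real `t`,
`θ₃(t, q)/(θ₃(t, q²))² = (1/θ₃(0, q))·(1 + (θ₂(t, q²)/θ₃(t, q²))²)`. -/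
theorem theta_ratio_watson (q : ℝ) (hq : q ∈ Set.Ioo (0 : ℝ) 1) (t : ℝ) :
    theta3 t q / (theta3 t (q ^ 2)) ^ 2 =
      1 / theta3 0 q * (1 + (theta2 t (q ^ 2) / theta3 t (q ^ 2)) ^ 2) := by
  obtain ⟨hq0, hq1⟩ := hq
  have hq20 : 0 < q^2 := by positivity
  have hq21 : q^2 < 1 := by nlinarith
  have hB : 0 < theta3 t (q^2) := theta3_pos (q^2) hq20 hq21 t
  have hD : 0 < theta3 0 q := theta3_zero_pos q hq0 hq1
  have hkey := key_identity q hq0 hq1 t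
  field_simp
  nlinarith [hkey, sq_nonneg (theta3 t (q^2)), sq_nonneg (theta2 t (q^2))]
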